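/- Let A : ℝ → ℝ be measurable with 0 ≤ A(q) ≤ ⟨q⟩^{-γ} for all q, where γ > 1 and ⟨q⟩ = (1+q²)^{1/2}. Then there is a constant C = C(γ) such that for all s ≥ 0, ∫_{-∞}^{∞} 2A(p)/(A(p)s + 2) dp ≤ C·(1+s)^{-(1−1/γ)}. -/

import Mathlib

open MeasureTheory Set

/-- If `A` is measurable with `0 ≤ A(q) ≤ ⟨q⟩^{-γ}` for some `γ > 1`, then
`∫ 2A(p)/(A(p)s+2) dp ≤ C (1+s)^{-(1-1/γ)}` for all `s ≥ 0`, for a constant `C = C(γ)`. -/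
theorem stmt4 (γ : ℝ) (hγ : 1 < γ) :
    ∃ C : ℝ, 0 < C ∧ ∀ A : ℝ → ℝ, Measurable A →
      (∀ q, 0 ≤ A q ∧ A q ≤ Real.rpow (Real.sqrt (1 + q ^ 2)) (-γ)) →
      ∀ s : ℝ, 0 ≤ s →
        (∫ p : ℝ, 2 * A p / (A p * s + 2))
          ≤ C * Real.rpow (1 + s) (-(1 - 1 / γ)) := by
  have hγ1 : 0 < γ - 1 := by linarith
  have hγ0 : 0 < γ := by linarith
  refine ⟨4 + 2 / (γ - 1), by positivity, ?_⟩
  intro A hA hAb s hs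
  set w : ℝ → ℝ := fun p => Real.rpow (Real.sqrt (1 + p ^ 2)) (-γ) with hwdef
  have hw_eq : ∀ p, w p = (1 + p ^ 2) ^ (-γ / 2 : ℝ) := by
    intro p
    have h0 : (0:ℝ) ≤ 1 + p ^ 2 := by positivity
    rw [hwdef]
    show Real.sqrt (1 + p ^ 2) ^ (-γ) = _
    rw [Real.sqrt_eq_rpow, ← Real.rpow_mul h0]
    congr 1; ring
  -- integrability of w
  have hw_int : Integrable w := by
    have := integrable_rpow_neg_one_add_norm_sq (E := ℝ) (μ := volume) (r := γ)
      (by simpa using hγ)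
    simp only [Real.norm_eq_abs, sq_abs] at this
    refine this.congr ?_
    filter_upwards with p
    rw [hw_eq p]
  have hw_pos : ∀ p, 0 < w p := fun p => by
    rw [hw_eq p]; positivity
  have hw_le_one : ∀ p, w p ≤ 1 := fun p => by
    rw [hw_eq p]
    exact Real.rpow_le_one_of_one_le_of_nonpos (by nlinarith [sq_nonneg p]) (by linarith)
  have hw_even : ∀ p, w (-p) = w p := fun p => by simp [hwdef]
  have hw_cont : Continuous w := by
    have : Continuous fun p : ℝ => (1 + p ^ 2) ^ (-γ / 2 : ℝ) :=
      Continuous.rpow_const (by continuity) fun p => Or.inl (by positivity)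
    exact (funext hw_eq ▸ this : Continuous w)
  -- comparison function g
  set c : ℝ := 2 / (s + 2) with hc
  have hcpos : 0 < c := by positivity
  set g : ℝ → ℝ := fun p => min c (w p) with hg
  have hg_int : Integrable g := by
    refine hw_int.mono (continuous_const.min hw_cont).aestronglyMeasurable ?_
    filter_upwards with p
    rw [Real.norm_eq_abs, Real.norm_eq_abs,
      abs_of_nonneg (le_min hcpos.le (hw_pos p).le), abs_of_nonneg (hw_pos p).le]
    exact min_le_right _ _
  -- pointwise bounds
  have hf_nonneg : ∀ p, 0 ≤ 2 * A p / (A p * s + 2) := fun p => by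
    have h1 := (hAb p).1
    have : 0 < A p * s + 2 := by positivity
    positivity
  have hfg : ∀ p, 2 * A p / (A p * s + 2) ≤ g p := by
    intro p
    obtain ⟨h1, h2⟩ := hAb p
    have hA1 : A p ≤ 1 := h2.trans (hw_le_one p)
    have hd : 0 < A p * s + 2 := by positivity
    refine le_min ?_ ?_
    · rw [div_le_div_iff₀ hd (by positivity)]
      nlinarith
    · rw [div_le_iff₀ hd]
      nlinarith [hw_pos p, (hw_pos p).le, mul_nonneg (mul_nonneg (hw_pos p).le h1) hs]
  have step1 : (∫ p : ℝ, 2 * A p / (A p * s + 2)) ≤ ∫ p, g p :=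
    integral_mono_of_nonneg (Filter.Eventually.of_forall hf_nonneg) hg_int
      (Filter.Eventually.of_forall hfg)
  -- split the integral of g at R = (1+s)^(1/γ)
  set R : ℝ := (1 + s) ^ (1 / γ : ℝ) with hR
  have hR1 : 1 ≤ R := Real.one_le_rpow (by linarith) (by positivity)
  have hR0 : 0 < R := by linarith
  have hsplit : (∫ p, g p) = (∫ p in Icc (-R) R, g p) + ∫ p in (Icc (-R) R)ᶜ, g p :=
    (integral_add_compl measurableSet_Icc hg_int).symm
  -- bound on the inner part
  have hinner : (∫ p in Icc (-R) R, g p) ≤ 2 * R * c := by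
    have h1 : (∫ p in Icc (-R) R, g p) ≤ ∫ _ in Icc (-R) R, c :=
      setIntegral_mono_on hg_int.integrableOn (integrableOn_const measure_Icc_lt_top.ne)
        measurableSet_Icc fun p _ => min_le_left _ _
    rw [setIntegral_const, measureReal_def, Real.volume_Icc, smul_eq_mul] at h1
    rw [ENNReal.toReal_ofReal (by linarith)] at h1
    calc (∫ p in Icc (-R) R, g p) ≤ (R - -R) * c := h1
    _ = 2 * R * c := by ring
  -- bound on the outer part
  have houter_half : (∫ p in Ioi R, w p) ≤ R ^ (1 - γ) / (γ - 1) := by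
    have hmono : ∀ p ∈ Ioi R, w p ≤ p ^ (-γ) := by
      intro p hp
      have hp0 : 0 < p := lt_of_lt_of_le hR0 (le_of_lt hp)
      rw [hw_eq p]
      have : p ^ (-γ) = (p ^ 2) ^ (-γ / 2 : ℝ) := by
        rw [← Real.rpow_natCast p 2, ← Real.rpow_mul hp0.le]
        congr 1; push_cast; ring
      rw [this]
      exact Real.rpow_le_rpow_of_nonpos (by positivity) (by nlinarith) (by linarith)
    have hint : IntegrableOn (fun p : ℝ => p ^ (-γ)) (Ioi R) :=
      integrableOn_Ioi_rpow_of_lt (by linarith) hR0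
    have h1 : (∫ p in Ioi R, w p) ≤ ∫ p in Ioi R, p ^ (-γ) :=
      setIntegral_mono_on hw_int.integrableOn hint measurableSet_Ioi hmono
    rw [integral_Ioi_rpow_of_lt (by linarith) hR0] at h1
    calc (∫ p in Ioi R, w p) ≤ -R ^ (-γ + 1) / (-γ + 1) := h1
    _ = R ^ (1 - γ) / (γ - 1) := by
        rw [show (-γ + 1 : ℝ) = 1 - γ by ring]
        rw [div_eq_div_iff (by linarith) (by linarith)]
        ring
  have hneg_half : (∫ p in Iio (-R), w p) = ∫ p in Ioi R, w p := by
    have h1 : (∫ p in Ioi R, w (-p)) = ∫ p in Iic (-R), w p := integral_comp_neg_Ioi R w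
    simp only [hw_even] at h1
    rw [← integral_Iic_eq_integral_Iio]
    exact h1.symm
  have houter : (∫ p in (Icc (-R) R)ᶜ, g p) ≤ 2 * (R ^ (1 - γ) / (γ - 1)) := by
    have hgw : (∫ p in (Icc (-R) R)ᶜ, g p) ≤ ∫ p in (Icc (-R) R)ᶜ, w p :=
      setIntegral_mono_on hg_int.integrableOn hw_int.integrableOn
        measurableSet_Icc.compl fun p _ => min_le_right _ _
    have hcompl : (Icc (-R) R)ᶜ = Iio (-R) ∪ Ioi R := by
      ext x
      simp only [mem_compl_iff, mem_Icc, mem_union, mem_Iio, mem_Ioi, not_and_or, not_le]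
    rw [hcompl]
    rw [hcompl] at hgw
    rw [setIntegral_union (by
        rw [Set.disjoint_left]
        intro p hp hp'
        simp only [mem_Iio, mem_Ioi] at hp hp'
        linarith) measurableSet_Ioi hw_int.integrableOn hw_int.integrableOn] at hgw
    rw [hneg_half] at hgw
    linarith [houter_half]
  -- arithmetic conclusion
  set T : ℝ := (1 + s) ^ (-(1 - 1 / γ) : ℝ) with hT
  have hTpos : 0 < T := Real.rpow_pos_of_pos (by linarith) _
  have hRT : R ^ (1 - γ) = T := by
    rw [hR, hT, ← Real.rpow_mul (by linarith)]
    congr 1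
    field_simp
    ring
  have hRc : 2 * R * c ≤ 4 * T := by
    have h1 : 2 * R * c = 4 * (R / (s + 2)) := by rw [hc]; ring
    have h2 : R / (s + 2) ≤ R / (1 + s) :=
      div_le_div_of_nonneg_left hR0.le (by linarith) (by linarith)
    have h3 : R / (1 + s) = T := by
      rw [hR, hT, show (-(1 - 1/γ) : ℝ) = 1/γ - 1 by ring,
        Real.rpow_sub (by linarith), Real.rpow_one]
    rw [h1]
    nlinarith
  calc (∫ p : ℝ, 2 * A p / (A p * s + 2)) ≤ ∫ p, g p := step1
  _ = (∫ p in Icc (-R) R, g p) + ∫ p in (Icc (-R) R)ᶜ, g p := hsplit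
  _ ≤ 2 * R * c + 2 * (R ^ (1 - γ) / (γ - 1)) := by linarith
  _ ≤ 4 * T + 2 / (γ - 1) * T := by
      rw [hRT]
      have : 2 * (T / (γ - 1)) = 2 / (γ - 1) * T := by ring
      linarith [hRc, this.le]
  _ = (4 + 2 / (γ - 1)) * T := by ring
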